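/- There exist environments (e.g., an appropriately chosen ring MDP with nonzero γ) for which the order-k VE class with respect to all policies and any function set containing a constant function is a strict subset of the order-K VE class, where k < K and k divides K: M^k(Π, V) ⊊ M^K(Π, V). -/

import Mathlib

open Finset Function

/-- A model/environment: expected rewards and transition kernel over finite
state and action spaces. -/
structure MDP (S A : Type*) where
  r : S → A → ℝ
  p : S → A → S → ℝ

/-- A (stochastic) policy: a map from states to weights over actions. -/
abbrev Policy (S A : Type*) := S → A → ℝ

/-- The Bellman operator induced by a model `m` and policy `π` with discount `γ`. -/
noncomputable def bellman {S A : Type*} [Fintype S] [Fintype A]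
    (m : MDP S A) (γ : ℝ) (π : Policy S A) (v : S → ℝ) : S → ℝ :=
  fun s => ∑ a, π s a * (m.r s a + γ * ∑ s', m.p s a s' * v s')

/-- `π` is a genuine stochastic policy. -/
def IsPolicy {S A : Type*} [Fintype A] (π : Policy S A) : Prop :=
  (∀ s a, 0 ≤ π s a) ∧ ∀ s, ∑ a, π s a = 1

/-- `m` has genuine probability transitions. -/
def IsStochMDP {S A : Type*} [Fintype S] (m : MDP S A) : Prop :=
  (∀ s a s', 0 ≤ m.p s a s') ∧ ∀ s a, ∑ s', m.p s a s' = 1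

/-- The deterministic policy induced by a map `d : S → A`. -/
def det {S A : Type*} [DecidableEq A] (d : S → A) : Policy S A :=
  fun s a => if a = d s then 1 else 0

open Fin.CommRing

/-- Ring MDP on `Fin (N+1)` with shift `t`, reward `1{s=0} - γ·1{s+t=0}`. -/
noncomputable def ringMDP (N : ℕ) (γ : ℝ) (t : Fin (N + 1)) : MDP (Fin (N + 1)) (Fin 1) where
  r s _ := (if s = 0 then 1 else 0) - γ * (if s + t = 0 then 1 else 0)
  p s _ s' := if s' = s + t then 1 else 0

lemma ringMDP_stoch (N : ℕ) (γ : ℝ) (t : Fin (N + 1)) : IsStochMDP (ringMDP N γ t) := by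
  constructor
  · intro s a s'
    simp only [ringMDP]
    split <;> norm_num
  · intro s a
    simp [ringMDP]

lemma policy_one {S : Type*} (π : Policy S (Fin 1)) (hπ : IsPolicy π) (s : S) :
    π s 0 = 1 := by
  have := hπ.2 s
  simpa using this

lemma bellman_ring {N : ℕ} {γ : ℝ} {t : Fin (N + 1)} {π : Policy (Fin (N+1)) (Fin 1)}
    (hπ : IsPolicy π) (v : Fin (N+1) → ℝ) (s : Fin (N+1)) :
    bellman (ringMDP N γ t) γ π v s =
      ((if s = 0 then 1 else 0) - γ * (if s + t = 0 then 1 else 0)) + γ * v (s + t) := by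
  simp [bellman, policy_one π hπ, ringMDP, Fin.sum_univ_one, ite_mul]

lemma iter_ring {N : ℕ} {γ : ℝ} {t : Fin (N + 1)} {π : Policy (Fin (N+1)) (Fin 1)}
    (hπ : IsPolicy π) (n : ℕ) (v : Fin (N+1) → ℝ) (s : Fin (N+1)) :
    (bellman (ringMDP N γ t) γ π)^[n] v s =
      (if s = 0 then 1 else 0) - γ^n * (if s + n • t = 0 then 1 else 0)
        + γ^n * v (s + n • t) := by
  induction n generalizing s with
  | zero => simp
  | succ n ih =>
    rw [Function.iterate_succ_apply', bellman_ring hπ, ih]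
    have h1 : s + t + n • t = s + (n+1) • t := by rw [succ_nsmul]; ring
    rw [h1]
    ring

/-- There exist environments for which, for nonempty sets of genuine policies Ps
and function sets V containing a constant function and closed under Bellman
updates, the order-k VE class is a strict subset of the order-K VE class
(0 < k < K, k ∣ K, γ ∈ (0,1)). -/
theorem exists_env_order_k_VE_strict_subset (γ : ℝ) (h0 : 0 < γ) (h1 : γ < 1)
    (k K : ℕ) (hk : 0 < k) (hkK : k < K) (hdvd : k ∣ K) :
    ∃ (nS nA : ℕ) (env : MDP (Fin nS) (Fin nA)),
      IsStochMDP env ∧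
      ∀ (Ps : Set (Policy (Fin nS) (Fin nA))) (V : Set (Fin nS → ℝ)),
        Ps.Nonempty → (∀ π ∈ Ps, IsPolicy π) →
        (∃ c : ℝ, (fun _ => c) ∈ V) →
        (∀ v ∈ V, ∀ π ∈ Ps, bellman env γ π v ∈ V) →
        {m : MDP (Fin nS) (Fin nA) |
            ∀ π ∈ Ps, ∀ v ∈ V, (bellman m γ π)^[k] v = (bellman env γ π)^[k] v}
          ⊂ {m : MDP (Fin nS) (Fin nA) |
            ∀ π ∈ Ps, ∀ v ∈ V, (bellman m γ π)^[K] v = (bellman env γ π)^[K] v} := by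
  obtain ⟨N, rfl⟩ : ∃ N, K = N + 1 := ⟨K - 1, by omega⟩
  refine ⟨N + 1, 1, ringMDP N γ 1, ringMDP_stoch N γ 1, ?_⟩
  rintro Ps V hPs hPol ⟨c, hc⟩ hclosed
  constructor
  · -- the order-k class is contained in the order-K class
    intro m hm π hπ v hv
    have hp := hPol π hπ
    have memIter : ∀ (n : ℕ) (w : Fin (N+1) → ℝ), w ∈ V →
        (bellman (ringMDP N γ 1) γ π)^[n] w ∈ V := by
      intro n
      induction n with
      | zero => intro w hw; simpa using hw
      | succ n ih =>
        intro w hw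
        rw [Function.iterate_succ_apply']
        exact hclosed _ (ih w hw) π hπ
    have key : ∀ (q : ℕ) (w : Fin (N+1) → ℝ), w ∈ V →
        ((bellman m γ π)^[k])^[q] w = ((bellman (ringMDP N γ 1) γ π)^[k])^[q] w ∧
        ((bellman (ringMDP N γ 1) γ π)^[k])^[q] w ∈ V := by
      intro q
      induction q with
      | zero => intro w hw; exact ⟨rfl, hw⟩
      | succ q ih =>
        intro w hw
        obtain ⟨heq, hmem⟩ := ih w hw
        rw [Function.iterate_succ_apply', Function.iterate_succ_apply', heq]
        exact ⟨hm π hπ _ hmem, memIter k _ hmem⟩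
    obtain ⟨q, hq⟩ := hdvd
    have := (key q v hv).1
    rwa [← Function.iterate_mul, ← Function.iterate_mul, ← hq] at this
  · -- strictness: the double-shift ring is order-K VE but not order-k VE
    intro hcon
    obtain ⟨π, hπ⟩ := hPs
    have hp := hPol π hπ
    have hbig : ringMDP N γ 2 ∈ {m : MDP (Fin (N+1)) (Fin 1) |
        ∀ π ∈ Ps, ∀ v ∈ V,
          (bellman m γ π)^[N+1] v = (bellman (ringMDP N γ 1) γ π)^[N+1] v} := by
      intro π' hπ' v _
      have hp' := hPol π' hπ'
      funext s
      rw [iter_ring hp', iter_ring hp']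
      have e1 : (N+1) • (1 : Fin (N+1)) = 0 := by
        rw [nsmul_eq_mul]; simp
      have e2 : (N+1) • (2 : Fin (N+1)) = 0 := by
        rw [nsmul_eq_mul]; simp
      rw [e1, e2]
    have hsmall := hcon hbig π hπ (fun _ => c) hc
    have heval := congrFun hsmall (-(k : Fin (N+1)))
    rw [iter_ring hp, iter_ring hp] at heval
    have hkN : k < N + 1 := hkK
    have hk0 : (k : Fin (N+1)) ≠ 0 := by
      intro h
      have := congrArg Fin.val h
      simp [Fin.val_natCast, Nat.mod_eq_of_lt hkN] at this
      omega
    have hneg0 : -(k : Fin (N+1)) ≠ 0 := by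
      simpa [neg_eq_zero] using hk0
    have e1 : -(k : Fin (N+1)) + k • (1 : Fin (N+1)) = 0 := by
      rw [nsmul_eq_mul]; ring
    have e2 : -(k : Fin (N+1)) + k • (2 : Fin (N+1)) = (k : Fin (N+1)) := by
      rw [nsmul_eq_mul]; ring
    rw [e1, e2] at heval
    rw [if_neg hneg0, if_neg hk0, if_pos rfl] at heval
    have hpow : 0 < γ ^ k := pow_pos h0 k
    nlinarith [heval]
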